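/- Let G be a group acting on a set S, let H be a normal subgroup of G, and let 𝒞 be a cocomplete category. Regard the groups G, H and G/H as one-object groupoids, and let ∫_G S denote the action groupoid (Grothendieck construction) of the G-set S. Let X : ∫_G S → 𝒞 be a functor. Form the object ∐_{s∈S} X(s) of 𝒞 with the G-action in which g ∈ G maps the summand X(s) to the summand X(g·s) via X applied to the morphism g : s → g·s, and let (∐_{s∈S} X(s))_H denote the H-coinvariants, i.e. the colimit over the one-object groupoid H of the restricted H-action, equipped with the G/H-action induced by the G-action. Then there is an isomorphism of G/H-modules in 𝒞 (i.e. of functors from the one-object groupoid G/H to 𝒞) between (∐_{s∈S} X(s))_H and the left Kan extension of X along the composite functor ∫_G S → G → G/H of the canonical projection and the quotient functor. -/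

import Mathlib

open CategoryTheory CategoryTheory.Limits

set_option synthInstance.maxHeartbeats 1000000
set_option maxHeartbeats 1000000

universe v u

section Setup

variable {G : Type} [Group G] {S : Type} [MulAction G S]
variable {𝒞 : Type u} [Category.{v} 𝒞] [HasColimitsOfSize.{0, 0} 𝒞]

/-- An element of `S` as an object of the action groupoid `∫_G S`. -/
def ob (G : Type) [Group G] {S : Type} [MulAction G S] (s : S) : ActionCategory G S :=
  ⟨⟨⟩, s⟩

/-- The morphism `s ⟶ g • s` of the action groupoid given by `g`. -/
def actHom (g : G) (s : S) : ob G s ⟶ ob G (g • s) := ⟨g, rfl⟩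

variable (X : ActionCategory G S ⥤ 𝒞)

/-- The coproduct `∐_{s ∈ S} X(s)`. -/
noncomputable abbrev CoprodX : 𝒞 := ∐ (fun s : S => X.obj (ob G s))

lemma aux_map (g : G) (s t : S) (h : g • s = t) :
    X.map (show ob G s ⟶ ob G t from ⟨g, h⟩) ≫ Sigma.ι (fun s : S => X.obj (ob G s)) t =
      X.map (actHom g s) ≫ Sigma.ι (fun s : S => X.obj (ob G s)) (g • s) := by
  subst h; rfl

/-- The `G`-action on `∐_{s ∈ S} X(s)`, in which `g` maps the summand `X(s)` to the summand
`X(g • s)` via `X` applied to the morphism `g : s → g • s`. -/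
noncomputable def MHom : G →* End (CoprodX X) where
  toFun g := Sigma.desc fun s => X.map (actHom g s) ≫ Sigma.ι (fun s : S => X.obj (ob G s)) (g • s)
  map_one' := by
    apply Sigma.hom_ext
    intro s
    rw [Sigma.ι_desc]
    rw [← aux_map X 1 s s (one_smul G s)]
    have h1 : (show ob G s ⟶ ob G s from ⟨(1 : G), one_smul G s⟩) = 𝟙 (ob G s) :=
      Subtype.ext rfl
    rw [h1, X.map_id, Category.id_comp, End.one_def]
    exact (Category.comp_id _).symm
  map_mul' g₁ g₂ := by
    apply Sigma.hom_ext
    intro s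
    rw [End.mul_def, Sigma.ι_desc, ← Category.assoc, Sigma.ι_desc]
    rw [← aux_map X (g₁ * g₂) s (g₁ • g₂ • s) (mul_smul g₁ g₂ s)]
    have h2 : (show ob G s ⟶ ob G (g₁ • g₂ • s) from ⟨g₁ * g₂, mul_smul g₁ g₂ s⟩) =
        actHom g₂ s ≫ actHom g₁ (g₂ • s) := Subtype.ext rfl
    rw [h2, X.map_comp]
    simp

lemma ι_MHom (g : G) (s : S) :
    Sigma.ι (fun s : S => X.obj (ob G s)) s ≫ (MHom X g : CoprodX X ⟶ CoprodX X) =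
      X.map (actHom g s) ≫ Sigma.ι (fun s : S => X.obj (ob G s)) (g • s) :=
  colimit.ι_desc _ _

variable (H : Subgroup G)

/-- The functor `SingleObj H ⥤ SingleObj G` induced by the inclusion. -/
def inclH : SingleObj ↥H ⥤ SingleObj G := H.subtype.toFunctor

/-- `∐_{s ∈ S} X(s)` with its `G`-action, as a `G`-module in `𝒞`. -/
noncomputable def Mfun : SingleObj G ⥤ 𝒞 := SingleObj.functor (MHom X)

/-- The `H`-coinvariants of `∐_{s ∈ S} X(s)`, i.e. the colimit over the one-object groupoid
`H` of the restricted `H`-action. -/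
noncomputable abbrev Dobj : 𝒞 := colimit (inclH (G := G) H ⋙ Mfun X)

lemma key (h : ↥H) :
    (MHom X ↑h : CoprodX X ⟶ CoprodX X) ≫
        colimit.ι (inclH (G := G) H ⋙ Mfun X) (SingleObj.star ↥H) =
      colimit.ι (inclH (G := G) H ⋙ Mfun X) (SingleObj.star ↥H) :=
  colimit.w (inclH (G := G) H ⋙ Mfun X) (show SingleObj.star ↥H ⟶ SingleObj.star ↥H from h)

lemma keyG [H.Normal] (g : G) (h : ↥H) :
    (MHom X ↑h : CoprodX X ⟶ CoprodX X) ≫ (MHom X g : CoprodX X ⟶ CoprodX X) ≫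
        colimit.ι (inclH (G := G) H ⋙ Mfun X) (SingleObj.star ↥H) =
      (MHom X g : CoprodX X ⟶ CoprodX X) ≫
        colimit.ι (inclH (G := G) H ⋙ Mfun X) (SingleObj.star ↥H) := by
  have h2 : g * ↑h = ↑(⟨g * ↑h * g⁻¹, (‹H.Normal›).conj_mem ↑h h.2 g⟩ : ↥H) * g := by
    group
  have h3 : (MHom X ↑h : CoprodX X ⟶ CoprodX X) ≫ MHom X g = MHom X (g * ↑h) := by
    rw [map_mul]; rfl
  erw [← Category.assoc, h3, h2, map_mul, End.mul_def, Category.assoc, key]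

/-- The cocone used to define the action of `g : G` on the `H`-coinvariants. -/
noncomputable def coconeG [H.Normal] (g : G) : Cocone (inclH (G := G) H ⋙ Mfun X) where
  pt := Dobj X H
  ι :=
    { app := fun _ => (MHom X g : CoprodX X ⟶ CoprodX X) ≫
        colimit.ι (inclH (G := G) H ⋙ Mfun X) (SingleObj.star ↥H)
      naturality := fun j j' f => (keyG X H g f).trans (Category.comp_id _).symm }

/-- The action of `g : G` on the `H`-coinvariants. -/
noncomputable def psiFun [H.Normal] (g : G) : Dobj X H ⟶ Dobj X H :=
  colimit.desc _ (coconeG X H g)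

lemma ι_psiFun [H.Normal] (g : G) (j : SingleObj ↥H) :
    colimit.ι (inclH (G := G) H ⋙ Mfun X) j ≫ psiFun X H g =
      (MHom X g : CoprodX X ⟶ CoprodX X) ≫
        colimit.ι (inclH (G := G) H ⋙ Mfun X) (SingleObj.star ↥H) :=
  colimit.ι_desc _ _

/-- The `G`-action on the `H`-coinvariants induced by the `G`-action on `∐_{s ∈ S} X(s)`. -/
noncomputable def psi [H.Normal] : G →* End (Dobj X H) where
  toFun := psiFun X H
  map_one' := by
    apply colimit.hom_ext
    intro j
    rw [End.one_def, Category.comp_id, ι_psiFun]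
    have h1 : MHom X (1 : G) = 𝟙 (CoprodX X) := map_one _
    rw [h1]
    exact Category.id_comp _
  map_mul' g₁ g₂ := by
    apply colimit.hom_ext
    intro j
    erw [ι_psiFun, End.mul_def, ← Category.assoc, ι_psiFun, Category.assoc, ι_psiFun,
      map_mul, End.mul_def, Category.assoc]
    exact rfl

lemma psi_ker [H.Normal] : ∀ h ∈ H, psi X H h = 1 := by
  intro h hh
  apply colimit.hom_ext
  intro j
  rw [End.one_def, Category.comp_id]
  show colimit.ι _ j ≫ psiFun X H h = _
  rw [ι_psiFun]
  exact key X H ⟨h, hh⟩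
/-- The `H`-coinvariants of `∐_{s ∈ S} X(s)` with the induced `G/H`-action, as a
`G/H`-module in `𝒞`. -/
noncomputable def Nfun [H.Normal] : SingleObj (G ⧸ H) ⥤ 𝒞 :=
  SingleObj.functor (QuotientGroup.lift H (psi X H) (psi_ker X H))

/-- The composite `∫_G S ⥤ G ⥤ G/H` of the canonical projection and the quotient functor. -/
def Fq [H.Normal] : ActionCategory G S ⥤ SingleObj (G ⧸ H) :=
  ActionCategory.π G S ⋙ (QuotientGroup.mk' H).toFunctor

/-- The canonical natural transformation exhibiting the `H`-coinvariants of `∐ X(s)` as a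
left Kan extension. -/
noncomputable def alphaTrans [H.Normal] : X ⟶ Fq (S := S) H ⋙ Nfun X H where
  app p := Sigma.ι (fun s : S => X.obj (ob G s)) p.back ≫
    colimit.ι (inclH (G := G) H ⋙ Mfun X) (SingleObj.star ↥H)
  naturality p q f := by
    have h1 : (Fq (S := S) H ⋙ Nfun X H).map f = psiFun X H f.val := by
      show QuotientGroup.lift H (psi X H) (psi_ker X H) (QuotientGroup.mk f.val) = _
      rfl
    erw [h1, Category.assoc, ι_psiFun, ← Category.assoc, ← Category.assoc, ι_MHom]
    exact congrArg (fun t => t ≫ colimit.ι (inclH (G := G) H ⋙ Mfun X) (SingleObj.star ↥H))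
      (aux_map X f.val p.back q.back f.2)

end Setup


section Proof

set_option linter.unusedSectionVars false

variable {G : Type} [Group G] {S : Type} [MulAction G S]
variable {𝒞 : Type u} [Category.{v} 𝒞] [HasColimitsOfSize.{0, 0} 𝒞]
variable (X : ActionCategory G S ⥤ 𝒞) (H : Subgroup G) [H.Normal]
variable (Y : SingleObj (G ⧸ H) ⥤ 𝒞) (β : X ⟶ Fq (S := S) H ⋙ Y)

noncomputable def phiE : CoprodX X ⟶ Y.obj (SingleObj.star (G ⧸ H)) :=
  Sigma.desc fun s => β.app (ob G s)

lemma ι_phiE (s : S) :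
    Sigma.ι (fun s : S => X.obj (ob G s)) s ≫ phiE X H Y β = β.app (ob G s) :=
  colimit.ι_desc _ _

lemma betaNat (g : G) (s : S) :
    X.map (actHom g s) ≫ β.app (ob G (g • s)) =
      β.app (ob G s) ≫ Y.map
        (show SingleObj.star (G ⧸ H) ⟶ SingleObj.star (G ⧸ H) from QuotientGroup.mk g) :=
  β.naturality (actHom g s)

lemma phiE_equiv (g : G) :
    (MHom X g : CoprodX X ⟶ CoprodX X) ≫ phiE X H Y β =
      phiE X H Y β ≫ Y.map
        (show SingleObj.star (G ⧸ H) ⟶ SingleObj.star (G ⧸ H) from QuotientGroup.mk g) := by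
  apply Sigma.hom_ext
  intro s
  rw [← Category.assoc, ι_MHom, Category.assoc, ι_phiE, betaNat, ← Category.assoc, ι_phiE]

lemma phiE_inv (h : ↥H) :
    (MHom X ↑h : CoprodX X ⟶ CoprodX X) ≫ phiE X H Y β = phiE X H Y β := by
  rw [phiE_equiv]
  have h1 : (QuotientGroup.mk (↑h : G) : G ⧸ H) = 1 := (QuotientGroup.eq_one_iff _).2 h.2
  have h2 : (show SingleObj.star (G ⧸ H) ⟶ SingleObj.star (G ⧸ H) from QuotientGroup.mk ↑h) =
      𝟙 (SingleObj.star (G ⧸ H)) := h1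
  rw [h2, Y.map_id, Category.comp_id]

noncomputable def descD : Dobj X H ⟶ Y.obj (SingleObj.star (G ⧸ H)) :=
  colimit.desc _
    { pt := Y.obj (SingleObj.star (G ⧸ H))
      ι := { app := fun _ => phiE X H Y β
             naturality := fun j j' f => by
               exact (phiE_inv X H Y β f).trans (Category.comp_id _).symm } }

lemma ι_descD (j : SingleObj ↥H) :
    colimit.ι (inclH (G := G) H ⋙ Mfun X) j ≫ descD X H Y β = phiE X H Y β :=
  colimit.ι_desc _ _

lemma Nfun_map_mk (g : G) :
    (Nfun X H).map (show SingleObj.star (G ⧸ H) ⟶ SingleObj.star (G ⧸ H)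
      from QuotientGroup.mk g) = psiFun X H g := by
  show QuotientGroup.lift H (psi X H) (psi_ker X H) (QuotientGroup.mk g) = _
  rfl

noncomputable def gammaNat : Nfun X H ⟶ Y where
  app _ := descD X H Y β
  naturality j j' f := by
    induction f using Quotient.inductionOn with
    | h g =>
      apply colimit.hom_ext
      intro k
      erw [← Category.assoc,
        show (Nfun X H).map (Quotient.mk _ g) = psiFun X H g from Nfun_map_mk X H g,
        ι_psiFun, Category.assoc, ι_descD, phiE_equiv, ← Category.assoc, ι_descD]
      rfl

lemma gamma_fac :
    alphaTrans X H ≫ Functor.whiskerLeft (Fq (S := S) H) (gammaNat X H Y β) = β := by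
  ext p
  obtain ⟨⟨⟩, s⟩ := p
  show (Sigma.ι (fun s : S => X.obj (ob G s)) s ≫
      colimit.ι (inclH (G := G) H ⋙ Mfun X) (SingleObj.star ↥H)) ≫ descD X H Y β =
    β.app (ob G s)
  erw [Category.assoc, ι_descD, ι_phiE]

end Proof

/-- Let `G` be a group acting on a set `S`, `H ⊴ G` a normal subgroup, and `𝒞` a
cocomplete category.  For a functor `X : ∫_G S ⥤ 𝒞`, the `H`-coinvariants of `∐_{s ∈ S} X(s)`
(with the `G`-action in which `g` maps the summand `X(s)` to `X(g • s)` via `X`), equipped with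
the induced `G/H`-action, is (isomorphic as a `G/H`-module in `𝒞` to) the left Kan extension of
`X` along the composite `∫_G S → G → G/H`: the functor `Nfun X H : SingleObj (G ⧸ H) ⥤ 𝒞`,
together with the canonical natural transformation `alphaTrans X H`, is a left Kan extension of
`X` along `Fq H`. -/
theorem stmt_1 {G : Type} [Group G] {S : Type} [MulAction G S] (H : Subgroup G) [H.Normal]
    {𝒞 : Type u} [Category.{v} 𝒞] [HasColimitsOfSize.{0, 0} 𝒞]
    (X : ActionCategory G S ⥤ 𝒞) :
    (Nfun X H).IsLeftKanExtension (alphaTrans X H) := by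
  constructor
  refine ⟨IsInitial.ofUniqueHom
    (fun E => StructuredArrow.homMk (gammaNat X H E.right E.hom) (gamma_fac X H E.right E.hom))
    ?_⟩
  intro E m
  ext j
  apply colimit.hom_ext
  intro k
  apply Sigma.hom_ext
  intro s
  cases j; cases k
  have hw : alphaTrans X H ≫ Functor.whiskerLeft (Fq (S := S) H) m.right = E.hom :=
    StructuredArrow.w m
  have hws := congrArg (fun t => t.app (ob G s)) hw
  simp only [NatTrans.comp_app] at hws
  have lhs : Sigma.ι (fun s : S => X.obj (ob G s)) s ≫
      colimit.ι (inclH (G := G) H ⋙ Mfun X) PUnit.unit ≫ m.right.app PUnit.unit =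
      E.hom.app (ob G s) := by
    erw [← Category.assoc]; exact hws
  erw [← Category.assoc, Category.assoc, lhs]
  show E.hom.app (ob G s) = Sigma.ι (fun s : S => X.obj (ob G s)) s ≫
      colimit.ι (inclH (G := G) H ⋙ Mfun X) PUnit.unit ≫ descD X H E.right E.hom
  erw [ι_descD X H E.right E.hom, ι_phiE X H E.right E.hom]
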